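/- Let G be one of the following graphs: the path P_4 on 4 vertices, the triangle C_3, or the 4-cycle C_4, and let I = I(G) be its edge ideal. Then for every integer n ≥ 1 there exist a generator f ∈ mingens(I) and a monomial m such that {f·g : g ∈ mingens(I^n)} = {h ∈ mingens(I^{n+1}) : h divides m}; that is, f·I^n is an HHZ-subideal of I^{n+1}. -/
import Mathlib


open scoped Classical

noncomputable section

namespace ChauHaMaithani

variable {V : Type*}

/-- The lcm of a finite set of monomials (exponent vectors): pointwise maximum. -/
def mlcm (σ : Finset (V → ℕ)) : V → ℕ := fun v => σ.sup fun g => g v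

/-- `m` is a bridge of `σ`: `m ∈ σ` and dropping `m` does not change the lcm. -/
def IsBridge (σ : Finset (V → ℕ)) (m : V → ℕ) : Prop :=
  m ∈ σ ∧ mlcm (σ.erase m) = mlcm σ

/-- `m` is a gap of `σ`: `m ∉ σ` and adding `m` does not change the lcm. -/
def IsGap (σ : Finset (V → ℕ)) (m : V → ℕ) : Prop :=
  m ∉ σ ∧ mlcm (insert m σ) = mlcm σ

/-- A total order `≻` on monomials is encoded by a ranking function `ord`:
`m ≻ m'` iff `ord m' < ord m` (injectivity on the generating set is assumed separately).
`m` is a true gap of `σ` if it is a gap and every bridge of `σ ∪ {m}` dominated by `m`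
is already a bridge of `σ`. -/
def IsTrueGap (ord : (V → ℕ) → ℕ) (σ : Finset (V → ℕ)) (m : V → ℕ) : Prop :=
  IsGap σ m ∧ ∀ m', IsBridge (insert m σ) m' → ord m' < ord m → IsBridge σ m'

/-- `σ` is type-1: it has a true gap (in `M`) dominating none of its bridges. -/
def Type1 (M : Finset (V → ℕ)) (ord : (V → ℕ) → ℕ) (σ : Finset (V → ℕ)) : Prop :=
  ∃ m ∈ M, IsTrueGap ord σ m ∧ ∀ b, IsBridge σ b → ¬ ord b < ord m

/-- `σ` is potentially-type-2: it has a bridge dominating none of its true gaps. -/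
def PotType2 (M : Finset (V → ℕ)) (ord : (V → ℕ) → ℕ) (σ : Finset (V → ℕ)) : Prop :=
  ∃ b, IsBridge σ b ∧ ∀ m ∈ M, IsTrueGap ord σ m → ¬ ord m < ord b

/-- `b` is the `≻`-smallest bridge of `σ`. -/
def IsSBridge (ord : (V → ℕ) → ℕ) (σ : Finset (V → ℕ)) (b : V → ℕ) : Prop :=
  IsBridge σ b ∧ ∀ b', IsBridge σ b' → ord b ≤ ord b'

/-- `σ` is type-2. -/
def Type2 (M : Finset (V → ℕ)) (ord : (V → ℕ) → ℕ) (σ : Finset (V → ℕ)) : Prop :=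
  PotType2 M ord σ ∧
    ∀ σ' : Finset (V → ℕ), σ' ⊆ M → σ' ≠ σ → PotType2 M ord σ' →
      ∀ b b', IsSBridge ord σ b → IsSBridge ord σ' b' →
        σ'.erase b' = σ.erase b → ord b < ord b'

/-- `M` (the minimal generating set of a monomial ideal) is bridge-friendly w.r.t. `ord`:
every potentially-type-2 subset is type-2. -/
def BridgeFriendlyWrt (M : Finset (V → ℕ)) (ord : (V → ℕ) → ℕ) : Prop :=
  ∀ σ ⊆ M, PotType2 M ord σ → Type2 M ord σ

/-- `M` is bridge-friendly: bridge-friendly w.r.t. some total order on `M`. -/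
def BridgeFriendly (M : Finset (V → ℕ)) : Prop :=
  ∃ ord : (V → ℕ) → ℕ, Set.InjOn ord M ∧ BridgeFriendlyWrt M ord

/-- `σ = {m_1 ≻ ⋯ ≻ m_k} ⊆ M` is Lyubeznik-critical w.r.t. `ord`: there is no `m ∈ M` with
`m_t ≻ m` and `m ∣ lcm(m_1, …, m_t)` for some `1 < t ≤ k`. -/
def LyubCritical (M : Finset (V → ℕ)) (ord : (V → ℕ) → ℕ) (σ : Finset (V → ℕ)) : Prop :=
  σ ⊆ M ∧ ¬ ∃ m ∈ M, ∃ t ∈ σ, (∃ u ∈ σ, ord t < ord u) ∧ ord m < ord t ∧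
      ∀ v, m v ≤ mlcm (σ.filter fun g => ord t ≤ ord g) v

/-- `M` is Lyubeznik: for some total order on `M`, no Lyubeznik-critical subset has a
bridge (equivalently, the associated Lyubeznik resolution is minimal). -/
def IsLyubeznik (M : Finset (V → ℕ)) : Prop :=
  ∃ ord : (V → ℕ) → ℕ, Set.InjOn ord M ∧
    ∀ σ : Finset (V → ℕ), LyubCritical M ord σ → ∀ b, ¬ IsBridge σ b

/-- The quadratic monomial `xy` attached to an edge `e = {x,y}`. -/
def edgeMon (e : Sym2 V) : V → ℕ := fun v => if v ∈ e then 1 else 0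

/-- `mingens(I(G))`: the edge monomials of `G`. -/
def edgeGens [Fintype V] (G : SimpleGraph V) : Finset (V → ℕ) :=
  (Finset.univ.filter fun e : Sym2 V => e ∈ G.edgeSet).image edgeMon

/-- `mingens(I(G)^n)`: the monomials that are products of `n` edges of `G`. -/
def edgePowGens [Fintype V] (G : SimpleGraph V) (n : ℕ) : Finset (V → ℕ) :=
  (Finset.univ.filter fun f : Fin n → Sym2 V => ∀ i, f i ∈ G.edgeSet).image
    fun f => ∑ i, edgeMon (f i)

/-- A graph is chordal if it contains no induced cycle of length at least 4. -/
def Chordal (G : SimpleGraph V) : Prop :=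
  ∀ n, 4 ≤ n → IsEmpty (SimpleGraph.cycleGraph n ↪g G)


/-- Vertex type of the graph `L(a,b,c)`: `Sum.inl 0` is `x`, `Sum.inl 1` is `y`,
and the remaining summands are the leaves `x_i`, the leaves `y_j`, and the
triangle tips `z_k`. -/
abbrev LV (a b c : ℕ) := Fin 2 ⊕ (Fin a ⊕ Fin b ⊕ Fin c)

/-- The graph `L(a,b,c)`: `c` triangles glued along the common edge `{x,y}`, with
`a` leaves attached to `x` and `b` leaves attached to `y`. -/
def LGraph (a b c : ℕ) : SimpleGraph (LV a b c) :=
  SimpleGraph.fromRel fun u v =>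
    (u = Sum.inl 0 ∧ v = Sum.inl 1) ∨
    (∃ i, u = Sum.inl 0 ∧ v = Sum.inr (Sum.inl i)) ∨
    (∃ j, u = Sum.inl 1 ∧ v = Sum.inr (Sum.inr (Sum.inl j))) ∨
    (∃ k, (u = Sum.inl 0 ∨ u = Sum.inl 1) ∧ v = Sum.inr (Sum.inr (Sum.inr k)))

/-- The graph `BF(T,w)`: attach `w(e)` new triangles along each edge `e` of `T`. -/
def BFGraph {VT : Type} (T : SimpleGraph VT) (w : T.edgeSet → ℕ) :
    SimpleGraph (VT ⊕ (Σ e : T.edgeSet, Fin (w e))) :=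
  SimpleGraph.fromRel fun u v =>
    (∃ a b, u = Sum.inl a ∧ v = Sum.inl b ∧ T.Adj a b) ∨
    (∃ (a : VT) (e : T.edgeSet) (i : Fin (w e)), u = Sum.inl a ∧ v = Sum.inr ⟨e, i⟩ ∧
      a ∈ (e : Sym2 VT))

/-- The kite graph: the diamond (`K₄` minus the edge `{2,3}`) together with a pendant
vertex `4` attached to the degree-two vertex `2`. -/
def kite : SimpleGraph (Fin 5) :=
  SimpleGraph.fromEdgeSet {s(0,1), s(0,2), s(0,3), s(1,2), s(1,3), s(2,4)}

/-- The gem graph: the path `0-1-2-3` together with a vertex `4` adjacent to all of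
`0,1,2,3`. -/
def gem : SimpleGraph (Fin 5) :=
  SimpleGraph.fromEdgeSet {s(0,1), s(1,2), s(2,3), s(0,4), s(1,4), s(2,4), s(3,4)}

/-- The tadpole graph: the triangle `0,1,2` with a path `0-3-4` of length 2 attached. -/
def tadpole : SimpleGraph (Fin 5) :=
  SimpleGraph.fromEdgeSet {s(0,1), s(1,2), s(0,2), s(0,3), s(3,4)}

/-- The butterfly graph: two triangles `0,1,2` and `0,3,4` sharing the vertex `0`. -/
def butterfly : SimpleGraph (Fin 5) :=
  SimpleGraph.fromEdgeSet {s(0,1), s(1,2), s(0,2), s(0,3), s(3,4), s(0,4)}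

/-- The net graph: the triangle `0,1,2` with pendant vertices `3,4,5` attached to
`0,1,2` respectively. -/
def net : SimpleGraph (Fin 6) :=
  SimpleGraph.fromEdgeSet {s(0,1), s(1,2), s(0,2), s(0,3), s(1,4), s(2,5)}


/-! ### Auxiliary lemmas for Proposition 2.17 -/

section AuxHHZ

instance pathGraphAdjDecidable (n : ℕ) : DecidableRel (SimpleGraph.pathGraph n).Adj :=
  fun _ _ => decidable_of_iff _ SimpleGraph.pathGraph_adj.symm

lemma mem_edgeGens' [Fintype V] {G : SimpleGraph V} {m : V → ℕ} :
    m ∈ edgeGens G ↔ ∃ e ∈ G.edgeSet, m = edgeMon e := by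
  simp [edgeGens, eq_comm]

lemma mem_edgePowGens_zero [Fintype V] (G : SimpleGraph V) (m : V → ℕ) :
    m ∈ edgePowGens G 0 ↔ m = 0 := by
  simp [edgePowGens, eq_comm]

lemma mem_edgePowGens_succ [Fintype V] (G : SimpleGraph V) (k : ℕ) (m : V → ℕ) :
    m ∈ edgePowGens G (k+1) ↔ ∃ e ∈ G.edgeSet, ∃ g ∈ edgePowGens G k, m = edgeMon e + g := by
  simp only [edgePowGens, Finset.mem_image, Finset.mem_filter, Finset.mem_univ, true_and]
  constructor
  · rintro ⟨f, hf, rfl⟩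
    exact ⟨f 0, hf 0, ∑ i : Fin k, edgeMon (f i.succ),
      ⟨fun i => f i.succ, fun i => hf i.succ, rfl⟩, by rw [Fin.sum_univ_succ]⟩
  · rintro ⟨e, he, g, ⟨f, hf, rfl⟩, rfl⟩
    refine ⟨Fin.cons e f, fun i => Fin.cases he hf i, ?_⟩
    rw [Fin.sum_univ_succ]; simp

variable {W : Type*}

lemma map_edge {G : SimpleGraph V} {H : SimpleGraph W} (φ : G ≃g H) {e : Sym2 V}
    (he : e ∈ G.edgeSet) : Sym2.map ⇑φ e ∈ H.edgeSet := by
  induction e using Sym2.ind with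
  | _ x y => simpa [Sym2.map_pair_eq] using φ.map_adj_iff.2 he

lemma map_symm_map {G : SimpleGraph V} {H : SimpleGraph W} (φ : G ≃g H) (e : Sym2 V) :
    Sym2.map ⇑φ.symm (Sym2.map ⇑φ e) = e := by
  induction e using Sym2.ind with
  | _ x y => simp [Sym2.map_pair_eq]

lemma comp_edgeMon {G : SimpleGraph V} {H : SimpleGraph W} (φ : G ≃g H) (e : Sym2 W) :
    edgeMon e ∘ ⇑φ = edgeMon (Sym2.map ⇑φ.symm e) := by
  funext v
  have : φ v ∈ e ↔ v ∈ Sym2.map ⇑φ.symm e := by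
    induction e using Sym2.ind with
    | _ x y =>
      simp only [Sym2.map_pair_eq, Sym2.mem_iff]
      constructor
      · rintro (h | h) <;> [left; right] <;> rw [← h] <;> simp
      · rintro (h | h) <;> [left; right] <;> rw [h] <;> simp
  simp [edgeMon, Function.comp_apply, this]

lemma comp_mem [Fintype V] [Fintype W] {G : SimpleGraph V} {H : SimpleGraph W}
    (φ : G ≃g H) (k : ℕ) (m : W → ℕ) :
    m ∈ edgePowGens H k ↔ m ∘ ⇑φ ∈ edgePowGens G k := by
  induction k generalizing m with
  | zero =>
    rw [mem_edgePowGens_zero, mem_edgePowGens_zero]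
    constructor
    · rintro rfl; rfl
    · intro h; funext w
      have := congrFun h (φ.symm w)
      simpa using this
  | succ k ih =>
    rw [mem_edgePowGens_succ, mem_edgePowGens_succ]
    constructor
    · rintro ⟨e, he, g, hg, rfl⟩
      refine ⟨Sym2.map ⇑φ.symm e, map_edge φ.symm he, g ∘ ⇑φ, (ih g).1 hg, ?_⟩
      funext v
      have := congrFun (comp_edgeMon φ e) v
      simp only [Function.comp_apply, Pi.add_apply] at this ⊢
      rw [this]
    · rintro ⟨e, he, g, hg, hme⟩
      have hg' : g ∘ ⇑φ.symm ∈ edgePowGens H k := by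
        rw [ih]
        convert hg using 1
        funext v; simp
      refine ⟨Sym2.map ⇑φ e, map_edge φ he, g ∘ ⇑φ.symm, hg', ?_⟩
      funext w
      have h1 := congrFun hme (φ.symm w)
      have h2 := congrFun (comp_edgeMon φ (Sym2.map ⇑φ e)) (φ.symm w)
      rw [map_symm_map] at h2
      simp only [Function.comp_apply, Pi.add_apply] at h1 h2 ⊢
      simp only [RelIso.apply_symm_apply] at h1 h2
      rw [h2]
      exact h1

lemma transfer {W : Type} [Fintype V] [Fintype W] {G : SimpleGraph V} {H : SimpleGraph W}
    (φ : G ≃g H) (n : ℕ)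
    (hH : ∃ f ∈ edgeGens H, ∃ m : W → ℕ,
      (edgePowGens H n).image (fun g => f + g) =
        (edgePowGens H (n + 1)).filter fun h => ∀ v, h v ≤ m v) :
    ∃ f ∈ edgeGens G, ∃ m : V → ℕ,
      (edgePowGens G n).image (fun g => f + g) =
        (edgePowGens G (n + 1)).filter fun h => ∀ v, h v ≤ m v := by
  obtain ⟨f, hf, m, hm⟩ := hH
  refine ⟨f ∘ ⇑φ, ?_, m ∘ ⇑φ, ?_⟩
  · obtain ⟨e, he, rfl⟩ := mem_edgeGens'.1 hf
    rw [mem_edgeGens']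
    exact ⟨Sym2.map ⇑φ.symm e, map_edge φ.symm he, comp_edgeMon φ e⟩
  · ext h
    simp only [Finset.mem_image, Finset.mem_filter]
    constructor
    · rintro ⟨g, hg, rfl⟩
      have hg' : (g ∘ ⇑φ.symm) ∈ edgePowGens H n := by
        rw [comp_mem φ]
        convert hg using 1
        funext v; simp
      have hmem : (f + g ∘ ⇑φ.symm) ∈
          (edgePowGens H (n+1)).filter fun hh => ∀ v, hh v ≤ m v := by
        rw [← hm]; exact Finset.mem_image_of_mem _ hg'
      rw [Finset.mem_filter] at hmem
      obtain ⟨h1, h2⟩ := hmem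
      have hcomp : (f + g ∘ ⇑φ.symm) ∘ ⇑φ = f ∘ ⇑φ + g := by
        funext v; simp
      constructor
      · have := (comp_mem φ (n+1) _).1 h1
        rwa [hcomp] at this
      · intro v
        have := h2 (φ v)
        have hv : (f ∘ ⇑φ + g) v = (f + g ∘ ⇑φ.symm) (φ v) := by simp
        rw [hv]
        exact this
    · rintro ⟨h1, h2⟩
      have hmem : (h ∘ ⇑φ.symm) ∈
          (edgePowGens H (n+1)).filter fun hh => ∀ v, hh v ≤ m v := by
        rw [Finset.mem_filter]
        constructor
        · rw [comp_mem φ]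
          convert h1 using 1
          funext v; simp
        · intro w
          have := h2 (φ.symm w)
          simp only [Function.comp_apply] at this ⊢
          calc h (φ.symm w) ≤ m (φ (φ.symm w)) := this
            _ = m w := by simp
      rw [← hm] at hmem
      obtain ⟨g, hg, hgeq⟩ := Finset.mem_image.1 hmem
      refine ⟨g ∘ ⇑φ, (comp_mem φ n g).1 hg, ?_⟩
      funext v
      have := congrFun hgeq (φ v)
      simpa using this

end AuxHHZ


section Concrete

lemma pathGens_char (k : ℕ) (m : Fin 4 → ℕ) :
    m ∈ edgePowGens (SimpleGraph.pathGraph 4) k ↔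
      ∃ a b c, a + b + c = k ∧ m = ![a, a+b, b+c, c] := by
  have hedge : ∀ e : Sym2 (Fin 4), e ∈ (SimpleGraph.pathGraph 4).edgeSet ↔
      (e = s(0,1) ∨ e = s(1,2) ∨ e = s(2,3)) := by decide
  induction k generalizing m with
  | zero =>
    rw [mem_edgePowGens_zero]
    constructor
    · rintro rfl; exact ⟨0,0,0, rfl, by funext v; fin_cases v <;> simp⟩
    · rintro ⟨a,b,c,h,rfl⟩
      obtain ⟨rfl, rfl, rfl⟩ : a = 0 ∧ b = 0 ∧ c = 0 := by omega
      funext v; fin_cases v <;> simp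
  | succ k ih =>
    rw [mem_edgePowGens_succ]
    constructor
    · rintro ⟨e, he, g, hg, rfl⟩
      obtain ⟨a,b,c,hs,rfl⟩ := (ih g).1 hg
      rcases (hedge e).1 he with rfl | rfl | rfl
      · exact ⟨a+1, b, c, by omega, by funext v; fin_cases v <;> simp [edgeMon] <;> omega⟩
      · exact ⟨a, b+1, c, by omega, by funext v; fin_cases v <;> simp [edgeMon] <;> omega⟩
      · exact ⟨a, b, c+1, by omega, by funext v; fin_cases v <;> simp [edgeMon] <;> omega⟩
    · rintro ⟨a,b,c,hs,rfl⟩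
      rcases a with _ | a
      · rcases b with _ | b
        · rcases c with _ | c
          · omega
          · refine ⟨s(2,3), (hedge _).2 (by simp), ![0,0+0,0+c,c],
              (ih _).2 ⟨0,0,c, by omega, rfl⟩, ?_⟩
            funext v; fin_cases v <;> simp [edgeMon] <;> omega
        · refine ⟨s(1,2), (hedge _).2 (by simp), ![0,0+b,b+c,c],
            (ih _).2 ⟨0,b,c, by omega, rfl⟩, ?_⟩
          funext v; fin_cases v <;> simp [edgeMon] <;> omega
      · refine ⟨s(0,1), (hedge _).2 (by simp), ![a,a+b,b+c,c],
          (ih _).2 ⟨a,b,c, by omega, rfl⟩, ?_⟩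
        funext v; fin_cases v <;> simp [edgeMon] <;> omega

lemma cycle3Gens_char (k : ℕ) (m : Fin 3 → ℕ) :
    m ∈ edgePowGens (SimpleGraph.cycleGraph 3) k ↔
      ∃ a b c, a + b + c = k ∧ m = ![a+c, a+b, b+c] := by
  have hedge : ∀ e : Sym2 (Fin 3), e ∈ (SimpleGraph.cycleGraph 3).edgeSet ↔
      (e = s(0,1) ∨ e = s(1,2) ∨ e = s(0,2)) := by decide
  induction k generalizing m with
  | zero =>
    rw [mem_edgePowGens_zero]
    constructor
    · rintro rfl; exact ⟨0,0,0, rfl, by funext v; fin_cases v <;> simp⟩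
    · rintro ⟨a,b,c,h,rfl⟩
      obtain ⟨rfl, rfl, rfl⟩ : a = 0 ∧ b = 0 ∧ c = 0 := by omega
      funext v; fin_cases v <;> simp
  | succ k ih =>
    rw [mem_edgePowGens_succ]
    constructor
    · rintro ⟨e, he, g, hg, rfl⟩
      obtain ⟨a,b,c,hs,rfl⟩ := (ih g).1 hg
      rcases (hedge e).1 he with rfl | rfl | rfl
      · exact ⟨a+1, b, c, by omega, by funext v; fin_cases v <;> simp [edgeMon] <;> omega⟩
      · exact ⟨a, b+1, c, by omega, by funext v; fin_cases v <;> simp [edgeMon] <;> omega⟩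
      · exact ⟨a, b, c+1, by omega, by funext v; fin_cases v <;> simp [edgeMon] <;> omega⟩
    · rintro ⟨a,b,c,hs,rfl⟩
      rcases a with _ | a
      · rcases b with _ | b
        · rcases c with _ | c
          · omega
          · refine ⟨s(0,2), (hedge _).2 (by simp), ![0+c,0+0,0+c],
              (ih _).2 ⟨0,0,c, by omega, rfl⟩, ?_⟩
            funext v; fin_cases v <;> simp [edgeMon] <;> omega
        · refine ⟨s(1,2), (hedge _).2 (by simp), ![0+c,0+b,b+c],
            (ih _).2 ⟨0,b,c, by omega, rfl⟩, ?_⟩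
          funext v; fin_cases v <;> simp [edgeMon] <;> omega
      · refine ⟨s(0,1), (hedge _).2 (by simp), ![a+c,a+b,b+c],
          (ih _).2 ⟨a,b,c, by omega, rfl⟩, ?_⟩
        funext v; fin_cases v <;> simp [edgeMon] <;> omega

lemma cycle4Gens_char (k : ℕ) (m : Fin 4 → ℕ) :
    m ∈ edgePowGens (SimpleGraph.cycleGraph 4) k ↔
      ∃ a b c d, a + b + c + d = k ∧ m = ![a+d, a+b, b+c, c+d] := by
  have hedge : ∀ e : Sym2 (Fin 4), e ∈ (SimpleGraph.cycleGraph 4).edgeSet ↔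
      (e = s(0,1) ∨ e = s(1,2) ∨ e = s(2,3) ∨ e = s(0,3)) := by decide
  induction k generalizing m with
  | zero =>
    rw [mem_edgePowGens_zero]
    constructor
    · rintro rfl; exact ⟨0,0,0,0, rfl, by funext v; fin_cases v <;> simp⟩
    · rintro ⟨a,b,c,d,h,rfl⟩
      obtain ⟨rfl, rfl, rfl, rfl⟩ : a = 0 ∧ b = 0 ∧ c = 0 ∧ d = 0 := by omega
      funext v; fin_cases v <;> simp
  | succ k ih =>
    rw [mem_edgePowGens_succ]
    constructor
    · rintro ⟨e, he, g, hg, rfl⟩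
      obtain ⟨a,b,c,d,hs,rfl⟩ := (ih g).1 hg
      rcases (hedge e).1 he with rfl | rfl | rfl | rfl
      · exact ⟨a+1, b, c, d, by omega,
          by funext v; fin_cases v <;> simp [edgeMon] <;> omega⟩
      · exact ⟨a, b+1, c, d, by omega,
          by funext v; fin_cases v <;> simp [edgeMon] <;> omega⟩
      · exact ⟨a, b, c+1, d, by omega,
          by funext v; fin_cases v <;> simp [edgeMon] <;> omega⟩
      · exact ⟨a, b, c, d+1, by omega,
          by funext v; fin_cases v <;> simp [edgeMon] <;> omega⟩
    · rintro ⟨a,b,c,d,hs,rfl⟩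
      rcases a with _ | a
      · rcases b with _ | b
        · rcases c with _ | c
          · rcases d with _ | d
            · omega
            · refine ⟨s(0,3), (hedge _).2 (by simp), ![0+d,0+0,0+0,0+d],
                (ih _).2 ⟨0,0,0,d, by omega, rfl⟩, ?_⟩
              funext v; fin_cases v <;> simp [edgeMon] <;> omega
          · refine ⟨s(2,3), (hedge _).2 (by simp), ![0+d,0+0,0+c,c+d],
              (ih _).2 ⟨0,0,c,d, by omega, rfl⟩, ?_⟩
            funext v; fin_cases v <;> simp [edgeMon] <;> omega
        · refine ⟨s(1,2), (hedge _).2 (by simp), ![0+d,0+b,b+c,c+d],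
            (ih _).2 ⟨0,b,c,d, by omega, rfl⟩, ?_⟩
          funext v; fin_cases v <;> simp [edgeMon] <;> omega
      · refine ⟨s(0,1), (hedge _).2 (by simp), ![a+d,a+b,b+c,c+d],
          (ih _).2 ⟨a,b,c,d, by omega, rfl⟩, ?_⟩
        funext v; fin_cases v <;> simp [edgeMon] <;> omega

lemma concrete_P4 (n : ℕ) :
    ∃ f ∈ edgeGens (SimpleGraph.pathGraph 4), ∃ m : Fin 4 → ℕ,
      (edgePowGens (SimpleGraph.pathGraph 4) n).image (fun g => f + g) =
        (edgePowGens (SimpleGraph.pathGraph 4) (n + 1)).filter fun h => ∀ v, h v ≤ m v := by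
  have he01 : s((0 : Fin 4),1) ∈ (SimpleGraph.pathGraph 4).edgeSet := by decide
  refine ⟨edgeMon s(0,1), mem_edgeGens'.2 ⟨s(0,1), he01, rfl⟩, ![n+1, n+1, n, n], ?_⟩
  ext h
  simp only [Finset.mem_image, Finset.mem_filter]
  constructor
  · rintro ⟨g, hg, rfl⟩
    obtain ⟨a,b,c,hs,rfl⟩ := (pathGens_char n g).1 hg
    constructor
    · exact (pathGens_char _ _).2 ⟨a+1,b,c, by omega,
        by funext v; fin_cases v <;> simp [edgeMon] <;> omega⟩
    · intro v; fin_cases v <;> simp [edgeMon] <;> omega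
  · rintro ⟨h1, h2⟩
    obtain ⟨A,B,C,hs,rfl⟩ := (pathGens_char _ _).1 h1
    have hv2 := h2 2
    simp at hv2
    have hA : 1 ≤ A := by omega
    refine ⟨![A-1, (A-1)+B, B+C, C], (pathGens_char _ _).2 ⟨A-1,B,C, by omega, rfl⟩, ?_⟩
    funext v; fin_cases v <;> simp [edgeMon] <;> omega

lemma concrete_C3 (n : ℕ) :
    ∃ f ∈ edgeGens (SimpleGraph.cycleGraph 3), ∃ m : Fin 3 → ℕ,
      (edgePowGens (SimpleGraph.cycleGraph 3) n).image (fun g => f + g) =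
        (edgePowGens (SimpleGraph.cycleGraph 3) (n + 1)).filter fun h => ∀ v, h v ≤ m v := by
  have he01 : s((0 : Fin 3),1) ∈ (SimpleGraph.cycleGraph 3).edgeSet := by decide
  refine ⟨edgeMon s(0,1), mem_edgeGens'.2 ⟨s(0,1), he01, rfl⟩, ![n+1, n+1, n], ?_⟩
  ext h
  simp only [Finset.mem_image, Finset.mem_filter]
  constructor
  · rintro ⟨g, hg, rfl⟩
    obtain ⟨a,b,c,hs,rfl⟩ := (cycle3Gens_char n g).1 hg
    constructor
    · exact (cycle3Gens_char _ _).2 ⟨a+1,b,c, by omega,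
        by funext v; fin_cases v <;> simp [edgeMon] <;> omega⟩
    · intro v; fin_cases v <;> simp [edgeMon] <;> omega
  · rintro ⟨h1, h2⟩
    obtain ⟨A,B,C,hs,rfl⟩ := (cycle3Gens_char _ _).1 h1
    have hv2 := h2 2
    simp at hv2
    have hA : 1 ≤ A := by omega
    refine ⟨![(A-1)+C, (A-1)+B, B+C], (cycle3Gens_char _ _).2 ⟨A-1,B,C, by omega, rfl⟩, ?_⟩
    funext v; fin_cases v <;> simp [edgeMon] <;> omega

lemma concrete_C4 (n : ℕ) :
    ∃ f ∈ edgeGens (SimpleGraph.cycleGraph 4), ∃ m : Fin 4 → ℕ,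
      (edgePowGens (SimpleGraph.cycleGraph 4) n).image (fun g => f + g) =
        (edgePowGens (SimpleGraph.cycleGraph 4) (n + 1)).filter fun h => ∀ v, h v ≤ m v := by
  have he01 : s((0 : Fin 4),1) ∈ (SimpleGraph.cycleGraph 4).edgeSet := by decide
  refine ⟨edgeMon s(0,1), mem_edgeGens'.2 ⟨s(0,1), he01, rfl⟩, ![n+1, n+1, n, n], ?_⟩
  ext h
  simp only [Finset.mem_image, Finset.mem_filter]
  constructor
  · rintro ⟨g, hg, rfl⟩
    obtain ⟨a,b,c,d,hs,rfl⟩ := (cycle4Gens_char n g).1 hg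
    constructor
    · exact (cycle4Gens_char _ _).2 ⟨a+1,b,c,d, by omega,
        by funext v; fin_cases v <;> simp [edgeMon] <;> omega⟩
    · intro v; fin_cases v <;> simp [edgeMon] <;> omega
  · rintro ⟨h1, h2⟩
    obtain ⟨A,B,C,D,hs,rfl⟩ := (cycle4Gens_char _ _).1 h1
    have hv2 := h2 2
    have hv3 := h2 3
    simp at hv2 hv3
    rcases Nat.eq_zero_or_pos A with hA | hA
    · have hB : 1 ≤ B := by omega
      have hD : 1 ≤ D := by omega
      refine ⟨![0+(D-1), 0+(B-1), (B-1)+(C+1), (C+1)+(D-1)],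
        (cycle4Gens_char _ _).2 ⟨0,B-1,C+1,D-1, by omega, rfl⟩, ?_⟩
      funext v; fin_cases v <;> simp [edgeMon] <;> omega
    · refine ⟨![(A-1)+D, (A-1)+B, B+C, C+D],
        (cycle4Gens_char _ _).2 ⟨A-1,B,C,D, by omega, rfl⟩, ?_⟩
      funext v; fin_cases v <;> simp [edgeMon] <;> omega

end Concrete


/-- **Proposition 2.17.** If `G` is `P₄`, `C₃` or `C₄`, then for every `n ≥ 1` there is
a generator `f ∈ mingens(I(G))` such that `f·I(G)^n` is an HHZ-subideal of `I(G)^{n+1}`: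
for some monomial `m`, `{f·g : g ∈ mingens(I^n)} = {h ∈ mingens(I^{n+1}) : h ∣ m}`. -/
theorem power_HHZ_subideal {V : Type} [Fintype V] (G : SimpleGraph V)
    (hG : Nonempty (G ≃g SimpleGraph.pathGraph 4) ∨
      Nonempty (G ≃g SimpleGraph.cycleGraph 3) ∨
      Nonempty (G ≃g SimpleGraph.cycleGraph 4))
    (n : ℕ) (hn : 1 ≤ n) :
    ∃ f ∈ edgeGens G, ∃ m : V → ℕ,
      (edgePowGens G n).image (fun g => f + g) =
        (edgePowGens G (n + 1)).filter fun h => ∀ v, h v ≤ m v := by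
  rcases hG with hP | hC3 | hC4
  · obtain ⟨φ⟩ := hP
    refine transfer (W := Fin 4) φ n ?_
    obtain ⟨f, hf, m, hm⟩ := concrete_P4 n
    refine ⟨f, hf, m, Finset.ext fun h => ?_⟩
    rw [Finset.ext_iff] at hm
    have := hm h
    simp only [Finset.mem_filter, Finset.mem_image] at this ⊢
    exact this
  · obtain ⟨φ⟩ := hC3
    refine transfer (W := Fin 3) φ n ?_
    obtain ⟨f, hf, m, hm⟩ := concrete_C3 n
    refine ⟨f, hf, m, Finset.ext fun h => ?_⟩
    rw [Finset.ext_iff] at hm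
    have := hm h
    simp only [Finset.mem_filter, Finset.mem_image] at this ⊢
    exact this
  · obtain ⟨φ⟩ := hC4
    refine transfer (W := Fin 4) φ n ?_
    obtain ⟨f, hf, m, hm⟩ := concrete_C4 n
    refine ⟨f, hf, m, Finset.ext fun h => ?_⟩
    rw [Finset.ext_iff] at hm
    have := hm h
    simp only [Finset.mem_filter, Finset.mem_image] at this ⊢
    exact this

end ChauHaMaithani
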